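/- Let R = ℂ[x₀,…,x₄] and let l₀, l₁, l₂ be ℂ-linearly independent linear forms in R. If q₀, q₁, q₂ ∈ R are such that q₂·l₂ + q₁·l₁ + q₀·l₀ lies in the ideal (l₁, l₂, l₀²), then q₀ lies in the ideal (l₀, l₁, l₂). -/

import Mathlib

open MvPolynomial

noncomputable section
namespace Stmt8

abbrev R5 := MvPolynomial (Fin 5) ℂ

lemma exists_single_of_degree_one (d : Fin 5 →₀ ℕ) (hd : d.degree = 1) :
    ∃ i, d = Finsupp.single i 1 := by
  classical
  have h1 : d.support.Nonempty := by
    rw [Finsupp.support_nonempty_iff]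
    rintro rfl
    simp [Finsupp.degree] at hd
  obtain ⟨i, hi⟩ := h1
  refine ⟨i, ?_⟩
  have hone : d i = 1 := by
    have hle : d i ≤ 1 := by
      calc d i ≤ ∑ j ∈ d.support, d j := Finset.single_le_sum (fun _ _ => Nat.zero_le _) hi
      _ = 1 := hd
    exact le_antisymm hle (Nat.one_le_iff_ne_zero.mpr (Finsupp.mem_support_iff.mp hi))
  ext j
  rcases eq_or_ne j i with rfl | hne
  · simp [hone]
  · simp only [Finsupp.single_apply, if_neg (Ne.symm hne)]
    by_contra hj
    have hjs : j ∈ d.support := Finsupp.mem_support_iff.mpr hj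
    have hsub : ({i, j} : Finset (Fin 5)) ⊆ d.support := by
      intro x hx; simp at hx; rcases hx with rfl | rfl <;> assumption
    have h2 : (2 : ℕ) ≤ ∑ k ∈ d.support, d k := by
      calc (2:ℕ) ≤ ∑ k ∈ ({i, j} : Finset (Fin 5)), d k := by
            rw [Finset.sum_pair (Ne.symm hne)]
            have := Nat.one_le_iff_ne_zero.mpr hj
            omega
        _ ≤ _ := Finset.sum_le_sum_of_subset hsub
    have hd' : ∑ k ∈ d.support, d k = 1 := hd
    omega

lemma linform_eq (p : R5) (hp : p.IsHomogeneous 1) :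
    p = ∑ j, C (coeff (Finsupp.single j 1) p) * X j := by
  classical
  ext m
  rw [coeff_sum]
  simp only [coeff_C_mul, coeff_X']
  rcases eq_or_ne m.degree 1 with hm | hm
  · obtain ⟨i, rfl⟩ := exists_single_of_degree_one m hm
    rw [Finset.sum_eq_single i]
    · simp
    · intro b _ hb
      rw [if_neg, mul_zero]
      intro h
      exact hb (by simpa using (Finsupp.single_left_injective one_ne_zero) h)
    · simp
  · rw [hp.coeff_eq_zero hm, Finset.sum_eq_zero]
    intro j _
    rw [if_neg, mul_zero]
    intro h
    apply hm
    rw [← h]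
    simp [Finsupp.degree_single]


def κ : R5 →ₐ[ℂ] R5 :=
  aeval (fun i => if i = 1 ∨ i = 2 then 0 else X i)

lemma sub_kappa_mem (p : R5) : p - κ p ∈ Ideal.span ({X 1, X 2} : Set R5) := by
  induction p using MvPolynomial.induction_on with
  | C a => simp [κ]
  | add p q hp hq =>
      have : p + q - κ (p + q) = (p - κ p) + (q - κ q) := by
        rw [map_add]; ring
      rw [this]; exact Ideal.add_mem _ hp hq
  | mul_X p i hp =>
      rw [map_mul]
      have hXi : κ (X i) = if i = 1 ∨ i = 2 then 0 else X i := by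
        simp [κ]
      by_cases h : i = 1 ∨ i = 2
      · rw [hXi, if_pos h, mul_zero, sub_zero]
        have hX : (X i : R5) ∈ Ideal.span ({X 1, X 2} : Set R5) := by
          rcases h with rfl | rfl
          · exact Ideal.subset_span (by simp)
          · exact Ideal.subset_span (by simp)
        exact Ideal.mul_mem_left _ _ hX
      · rw [hXi, if_neg h]
        have : p * X i - κ p * X i = (p - κ p) * X i := by ring
        rw [this]
        exact Ideal.mul_mem_right _ _ hp

lemma xcase (p : R5) (h : p * X 0 ∈ Ideal.span ({X 1, X 2, (X 0) ^ 2} : Set R5)) :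
    p ∈ Ideal.span ({X 0, X 1, X 2} : Set R5) := by
  rw [Ideal.mem_span_insert] at h
  obtain ⟨a, y, hy, heq⟩ := h
  rw [Ideal.mem_span_insert] at hy
  obtain ⟨b, z, hz, rfl⟩ := hy
  rw [Ideal.mem_span_singleton'] at hz
  obtain ⟨c, rfl⟩ := hz
  -- p * X 0 = a * X 1 + (b * X 2 + c * X 0 ^ 2)
  have hk := congrArg κ heq
  have hX1 : κ (X 1 : R5) = 0 := by simp [κ]
  have hX2 : κ (X 2 : R5) = 0 := by simp [κ]
  have hX0 : κ (X 0 : R5) = X 0 := by simp [κ]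
  rw [map_add, map_add, map_mul, map_mul, map_mul, map_mul, map_pow, hX0, hX1, hX2] at hk
  simp only [mul_zero, zero_add, add_zero] at hk
  have hcancel : κ p = κ c * X 0 := by
    have hne : (X 0 : R5) ≠ 0 := X_ne_zero 0
    have : κ p * X 0 = (κ c * X 0) * X 0 := by rw [hk]; ring
    exact mul_right_cancel₀ hne this
  have h1 : p = (p - κ p) + κ c * X 0 := by rw [← hcancel]; ring
  rw [h1]
  refine Ideal.add_mem _ ?_ ?_
  · refine Ideal.span_mono ?_ (sub_kappa_mem p)
    intro x hx; simp at hx; rcases hx with rfl | rfl <;> simp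
  · exact Ideal.mul_mem_left _ _ (Ideal.subset_span (by simp))


def eL : (Fin 5 → ℂ) →ₗ[ℂ] R5 where
  toFun v := ∑ j, C (v j) * X j
  map_add' u v := by
    simp [map_add, add_mul, Finset.sum_add_distrib]
  map_smul' a v := by
    simp [MvPolynomial.smul_eq_C_mul, Finset.mul_sum, map_mul, mul_assoc]

def lmap (M : Matrix (Fin 5) (Fin 5) ℂ) : R5 →ₐ[ℂ] R5 :=
  aeval (fun i => ∑ j, C (M i j) * X j)

lemma lmap_X (M : Matrix (Fin 5) (Fin 5) ℂ) (i : Fin 5) :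
    lmap M (X i) = ∑ j, C (M i j) * X j := by
  simp [lmap]

lemma lmap_comp (M N : Matrix (Fin 5) (Fin 5) ℂ) (h : N * M = 1) :
    (lmap M).comp (lmap N) = AlgHom.id ℂ R5 := by
  apply MvPolynomial.algHom_ext
  intro i
  have step : ((lmap M).comp (lmap N)) (X i) = ∑ k, C ((N * M) i k) * X k := by
    have e1 : ((lmap M).comp (lmap N)) (X i)
        = ∑ j, C (N i j) * (∑ k, C (M j k) * X k) := by
      simp [lmap, algebraMap_eq]
    rw [e1]
    have e2 : ∀ j ∈ Finset.univ, C (N i j) * (∑ k, C (M j k) * X k)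
        = ∑ k, C (N i j * M j k) * X k := by
      intro j _
      rw [Finset.mul_sum]
      exact Finset.sum_congr rfl fun k _ => by rw [← mul_assoc, ← C_mul]
    rw [Finset.sum_congr rfl e2, Finset.sum_comm]
    exact Finset.sum_congr rfl fun k _ => by
      rw [← Finset.sum_mul, ← map_sum, Matrix.mul_apply]
  rw [step, h]
  rw [Finset.sum_eq_single i]
  · simp [Matrix.one_apply]
  · intro k _ hk
    simp [Matrix.one_apply, Ne.symm hk]
  · simp

end Stmt8

open Stmt8 in
theorem stmt_8 (l₀ l₁ l₂ : MvPolynomial (Fin 5) ℂ)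
    (h₀ : l₀.IsHomogeneous 1) (h₁ : l₁.IsHomogeneous 1) (h₂ : l₂.IsHomogeneous 1)
    (hind : LinearIndependent ℂ ![l₀, l₁, l₂])
    (q₀ q₁ q₂ : MvPolynomial (Fin 5) ℂ)
    (hF : q₂ * l₂ + q₁ * l₁ + q₀ * l₀ ∈ Ideal.span {l₁, l₂, l₀ ^ 2}) :
    q₀ ∈ Ideal.span {l₀, l₁, l₂} := by
  classical
  set L : Fin 3 → R5 := ![l₀, l₁, l₂] with hL
  set c : Fin 3 → (Fin 5 → ℂ) := fun i j => coeff (Finsupp.single j 1) (L i) with hcdef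
  have hec : ∀ i, eL (c i) = L i := by
    intro i
    have hhom : (L i).IsHomogeneous 1 := by fin_cases i <;> assumption
    exact (linform_eq (L i) hhom).symm
  have hc : LinearIndependent ℂ c := by
    apply LinearIndependent.of_comp eL
    have : eL ∘ c = L := funext hec
    rw [this]; exact hind
  obtain ⟨W, hW⟩ := Submodule.exists_isCompl (Submodule.span ℂ (Set.range c))
  have hfinK : Module.finrank ℂ (Submodule.span ℂ (Set.range c)) = 3 := by
    rw [finrank_span_eq_card hc]; simp
  have htot : Module.finrank ℂ (Fin 5 → ℂ) = 5 := by
    simp [Module.finrank_fintype_fun_eq_card]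
  have hfinW : Module.finrank ℂ W = 2 := by
    have := Submodule.finrank_add_eq_of_isCompl hW
    omega
  let d : Module.Basis (Fin 2) ℂ W := Module.finBasisOfFinrankEq ℂ W hfinW
  let g : Fin 2 → (Fin 5 → ℂ) := fun j => (d j : Fin 5 → ℂ)
  have hg : LinearIndependent ℂ g :=
    d.linearIndependent.map' W.subtype (Submodule.ker_subtype W)
  have hsum : LinearIndependent ℂ (Sum.elim c g) := by
    apply hc.sum_type hg
    have h1 : Submodule.span ℂ (Set.range g) ≤ W := by
      rw [Submodule.span_le]; rintro _ ⟨j, rfl⟩; exact (d j).2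
    exact hW.disjoint.mono_right h1
  set f : Fin 5 → (Fin 5 → ℂ) := Sum.elim c g ∘ ⇑(finSumFinEquiv (m := 3) (n := 2)).symm with hfdef
  have hf : LinearIndependent ℂ f := hsum.comp _ (finSumFinEquiv (m := 3) (n := 2)).symm.injective
  set M : Matrix (Fin 5) (Fin 5) ℂ := Matrix.of f with hMdef
  have hM : IsUnit M := Matrix.linearIndependent_rows_iff_isUnit.mp hf
  have hdet : IsUnit M.det := (Matrix.isUnit_iff_isUnit_det M).mp hM
  have hMN : M * M⁻¹ = 1 := Matrix.mul_nonsing_inv M hdet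
  have hNM : M⁻¹ * M = 1 := Matrix.nonsing_inv_mul M hdet
  let φ : R5 ≃ₐ[ℂ] R5 :=
    AlgEquiv.ofAlgHom (lmap M) (lmap M⁻¹) (lmap_comp M M⁻¹ hNM) (lmap_comp M⁻¹ M hMN)
  have hφX : ∀ i : Fin 5, φ (X i) = eL (f i) := by
    intro i
    show lmap M (X i) = eL (f i)
    rw [lmap_X]
    rfl
  have hf0 : f 0 = c 0 := rfl
  have hf1 : f 1 = c 1 := rfl
  have hf2 : f 2 = c 2 := rfl
  have hφ0 : φ (X 0) = l₀ := by rw [hφX 0, hf0, hec]; rfl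
  have hφ1 : φ (X 1) = l₁ := by rw [hφX 1, hf1, hec]; rfl
  have hφ2 : φ (X 2) = l₂ := by rw [hφX 2, hf2, hec]; rfl
  have hψ0 : φ.symm l₀ = X 0 := φ.symm_apply_eq.mpr hφ0.symm
  have hψ1 : φ.symm l₁ = X 1 := φ.symm_apply_eq.mpr hφ1.symm
  have hψ2 : φ.symm l₂ = X 2 := φ.symm_apply_eq.mpr hφ2.symm
  -- transfer hF along φ.symm
  have hF1 : φ.symm (q₂ * l₂ + q₁ * l₁ + q₀ * l₀) ∈
      Ideal.map (φ.symm : R5 →+* R5) (Ideal.span {l₁, l₂, l₀ ^ 2}) :=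
    Ideal.mem_map_of_mem _ hF
  rw [Ideal.map_span] at hF1
  have himg : (φ.symm : R5 →+* R5) '' {l₁, l₂, l₀ ^ 2}
      = ({X 1, X 2, (X 0) ^ 2} : Set R5) := by
    rw [Set.image_insert_eq, Set.image_insert_eq, Set.image_singleton]
    simp only [RingHom.coe_coe, map_pow, hψ0, hψ1, hψ2]
  rw [himg] at hF1
  have hF2 : φ.symm q₂ * X 2 + φ.symm q₁ * X 1 + φ.symm q₀ * X 0 ∈
      Ideal.span ({X 1, X 2, (X 0) ^ 2} : Set R5) := by
    simpa only [map_add, map_mul, hψ0, hψ1, hψ2] using hF1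
  have hp : φ.symm q₀ * X 0 ∈ Ideal.span ({X 1, X 2, (X 0) ^ 2} : Set R5) := by
    have e : φ.symm q₀ * X 0 =
        (φ.symm q₂ * X 2 + φ.symm q₁ * X 1 + φ.symm q₀ * X 0)
          - φ.symm q₂ * X 2 - φ.symm q₁ * X 1 := by ring
    rw [e]
    refine Ideal.sub_mem _ (Ideal.sub_mem _ hF2 ?_) ?_
    · exact Ideal.mul_mem_left _ _ (Ideal.subset_span (by simp))
    · exact Ideal.mul_mem_left _ _ (Ideal.subset_span (by simp))
  have hx := xcase (φ.symm q₀) hp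
  have hq : q₀ ∈ Ideal.map (φ : R5 →+* R5) (Ideal.span ({X 0, X 1, X 2} : Set R5)) := by
    have : q₀ = φ (φ.symm q₀) := (φ.apply_symm_apply q₀).symm
    rw [this]
    exact Ideal.mem_map_of_mem _ hx
  rw [Ideal.map_span] at hq
  have himg2 : (φ : R5 →+* R5) '' {X 0, X 1, X 2} = ({l₀, l₁, l₂} : Set R5) := by
    rw [Set.image_insert_eq, Set.image_insert_eq, Set.image_singleton]
    simp only [RingHom.coe_coe, hφ0, hφ1, hφ2]
  rwa [himg2] at hq
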